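/- For h > 0 and the system τ' = 1 + kμ, μ' = −kτ with k(τ,μ) = (2(τ² + h²(1+μ²))τ + (h²−1)(1+μ²)μ)/((1+r²)(h²+r²)), if a solution satisfies τ(s₀) = 0 at some s₀, then τ'(s₀) = h²(1 + μ(s₀)²)/(h² + μ(s₀)²) > 0. Consequently τ has at most one zero, and if it has a zero s₀, then τ < 0 on (−∞, s₀) and τ > 0 on (s₀, +∞). -/

import Mathlib

open Filter Set

/-- The curvature function of the generating curve of an `h`-pitched helicoidal
rotator to MCF in `ℍ²×ℝ`. -/
noncomputable def kF (h τ μ : ℝ) : ℝ :=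
  (2 * (τ ^ 2 + h ^ 2 * (1 + μ ^ 2)) * τ + (h ^ 2 - 1) * (1 + μ ^ 2) * μ) /
    ((1 + (τ ^ 2 + μ ^ 2)) * (h ^ 2 + (τ ^ 2 + μ ^ 2)))

/-- `(τ, μ)` is a (global) solution of the rotator ODE system
`τ′ = 1 + kμ`, `μ′ = −kτ`. -/
def IsSol (h : ℝ) (τ μ : ℝ → ℝ) : Prop :=
  ∀ s : ℝ,
    HasDerivAt τ (1 + kF h (τ s) (μ s) * μ s) s ∧
    HasDerivAt μ (-(kF h (τ s) (μ s) * τ s)) s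

/-- Sign of a function near a zero with positive derivative. -/
lemma sign_near_zero {f : ℝ → ℝ} {d s : ℝ} (hd : HasDerivAt f d s) (h0 : f s = 0)
    (hdp : 0 < d) :
    (∀ᶠ x in nhdsWithin s (Ioi s), 0 < f x) ∧ (∀ᶠ x in nhdsWithin s (Iio s), f x < 0) := by
  have hslope := hasDerivAt_iff_tendsto_slope.mp hd
  have hpos : ∀ᶠ x in nhdsWithin s {s}ᶜ, 0 < slope f s x :=
    hslope.eventually (eventually_gt_nhds hdp)
  constructor
  · have := hpos.filter_mono (nhdsWithin_mono s (fun x hx => ne_of_gt hx))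
    filter_upwards [this, self_mem_nhdsWithin] with x hx hx'
    have hxs : (0:ℝ) < x - s := sub_pos.mpr hx'
    have h1 : 0 < (f x - f s) / (x - s) := by simpa [slope_def_field] using hx
    have h2 : 0 < f x - f s := by
      have := mul_pos h1 hxs
      rwa [div_mul_cancel₀ _ (ne_of_gt hxs)] at this
    linarith
  · have := hpos.filter_mono (nhdsWithin_mono s (fun x hx => ne_of_lt hx))
    filter_upwards [this, self_mem_nhdsWithin] with x hx hx'
    have hxs : x - s < 0 := sub_neg.mpr hx'
    have h1 : 0 < (f x - f s) / (x - s) := by simpa [slope_def_field] using hx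
    rcases div_pos_iff.mp h1 with ⟨_, h⟩ | ⟨h, _⟩ <;> linarith

lemma pos_after {f : ℝ → ℝ} (hf : Continuous f)
    (hder : ∀ s, f s = 0 → ∃ d, HasDerivAt f d s ∧ 0 < d)
    (s₀ : ℝ) (h0 : f s₀ = 0) : ∀ s, s₀ < s → 0 < f s := by
  have C1 : ∀ s, s₀ < s → ¬ f s < 0 := by
    intro s₁ h1 hneg
    have hSc : IsCompact (Icc s₀ s₁ ∩ f ⁻¹' {0}) :=
      isCompact_Icc.inter_right (isClosed_singleton.preimage hf)
    have hSne : (Icc s₀ s₁ ∩ f ⁻¹' {0}).Nonempty := ⟨s₀, ⟨le_refl _, le_of_lt h1⟩, h0⟩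
    have hcmem := hSc.sSup_mem hSne
    set c := sSup (Icc s₀ s₁ ∩ f ⁻¹' {0}) with hcdef
    have hc0 : f c = 0 := hcmem.2
    have hcs : c < s₁ :=
      lt_of_le_of_ne hcmem.1.2 (fun he => absurd (he ▸ hc0) (ne_of_lt hneg))
    obtain ⟨d, hd, hdp⟩ := hder c hc0
    have hright := (sign_near_zero hd hc0 hdp).1
    have hIoo : Ioo c s₁ ∈ nhdsWithin c (Ioi c) := Ioo_mem_nhdsGT_of_mem ⟨le_refl _, hcs⟩
    obtain ⟨x, hxpos, hx1, hx2⟩ := (hright.and (eventually_mem_set.mpr hIoo)).exists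
    have h0mem : (0:ℝ) ∈ Ioo (f s₁) (f x) := ⟨hneg, hxpos⟩
    obtain ⟨z, hz, hz0⟩ := intermediate_value_Ioo' (le_of_lt hx2) hf.continuousOn h0mem
    have hzS : z ∈ Icc s₀ s₁ ∩ f ⁻¹' {0} :=
      ⟨⟨le_trans hcmem.1.1 (le_of_lt (lt_trans hx1 hz.1)), le_of_lt hz.2⟩, hz0⟩
    have : z ≤ c := le_csSup hSc.bddAbove hzS
    linarith [hx1, hz.1]
  intro s hs
  rcases lt_trichotomy (f s) 0 with hlt | heq | hgt
  · exact absurd hlt (C1 s hs)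
  · obtain ⟨d, hd, hdp⟩ := hder s heq
    have hleft := (sign_near_zero hd heq hdp).2
    have hIoo : Ioo s₀ s ∈ nhdsWithin s (Iio s) := Ioo_mem_nhdsLT_of_mem ⟨hs, le_refl _⟩
    obtain ⟨x, hxneg, hx1, _⟩ := (hleft.and (eventually_mem_set.mpr hIoo)).exists
    exact absurd hxneg (C1 x hx1)
  · exact hgt

/-- The derivative value at a zero of τ. -/
lemma deriv_at_zero (h : ℝ) (hh : 0 < h) (τ μ : ℝ → ℝ) (hsol : IsSol h τ μ)
    (s : ℝ) (hz : τ s = 0) :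
    HasDerivAt τ (h ^ 2 * (1 + μ s ^ 2) / (h ^ 2 + μ s ^ 2)) s ∧
      0 < h ^ 2 * (1 + μ s ^ 2) / (h ^ 2 + μ s ^ 2) := by
  have hden : (0:ℝ) < h ^ 2 + μ s ^ 2 := by positivity
  have key : 1 + kF h (τ s) (μ s) * μ s = h ^ 2 * (1 + μ s ^ 2) / (h ^ 2 + μ s ^ 2) := by
    rw [hz]; unfold kF
    have h1 : (1 + ((0:ℝ) ^ 2 + μ s ^ 2)) ≠ 0 := by positivity
    have h2 : (h ^ 2 + ((0:ℝ) ^ 2 + μ s ^ 2)) ≠ 0 := by positivity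
    field_simp
    ring
  refine ⟨?_, by positivity⟩
  have := (hsol s).1
  rwa [key] at this

theorem tau_zero_behaviour (h : ℝ) (hh : 0 < h) (τ μ : ℝ → ℝ)
    (hsol : IsSol h τ μ) (s₀ : ℝ) (hzero : τ s₀ = 0) :
    deriv τ s₀ = h ^ 2 * (1 + μ s₀ ^ 2) / (h ^ 2 + μ s₀ ^ 2) ∧
    0 < deriv τ s₀ ∧
    (∀ s : ℝ, s < s₀ → τ s < 0) ∧
    (∀ s : ℝ, s₀ < s → 0 < τ s) := by
  obtain ⟨hd0, hp0⟩ := deriv_at_zero h hh τ μ hsol s₀ hzero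
  have hderiv : deriv τ s₀ = h ^ 2 * (1 + μ s₀ ^ 2) / (h ^ 2 + μ s₀ ^ 2) := hd0.deriv
  have hcont : Continuous τ := by
    rw [continuous_iff_continuousAt]; exact fun s => (hsol s).1.continuousAt
  have hder : ∀ s, τ s = 0 → ∃ d, HasDerivAt τ d s ∧ 0 < d := fun s hz =>
    ⟨_, (deriv_at_zero h hh τ μ hsol s hz).1, (deriv_at_zero h hh τ μ hsol s hz).2⟩
  have hafter := pos_after hcont hder s₀ hzero
  refine ⟨hderiv, hderiv ▸ hp0, ?_, hafter⟩
  set g : ℝ → ℝ := fun x => -τ (-x) with hg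
  have hgc : Continuous g := (hcont.comp continuous_neg).neg
  have hgder' : ∀ x, g x = 0 → ∃ d, HasDerivAt g d x ∧ 0 < d := by
    intro x hx
    have hτ : τ (-x) = 0 := by simpa [hg, neg_eq_zero] using hx
    obtain ⟨d, hd, hdp⟩ := hder (-x) hτ
    refine ⟨d, ?_, hdp⟩
    have := ((hd.comp x (hasDerivAt_neg x)).neg)
    simpa [hg, mul_comm, Function.comp_def, Pi.neg_def] using this
  have hg0 : g (-s₀) = 0 := by simp [hg, hzero]
  have hposg := pos_after hgc hgder' (-s₀) hg0
  intro s hs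
  have := hposg (-s) (by linarith)
  simp only [hg, neg_neg] at this
  linarith
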